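/- Let α, β > 0 and (v, θ, ω) ∈ ℝ³ with ω > 0, H₁(v,θ,ω) < 0 and H₂(v,θ,ω) < 0. Then the C2a duration is strictly smaller than the C2b duration: −ω/α + (1/α)·√(2ω² − 4αθ + α²v²/β²) < −2θ/ω + |v|/β. -/

import Mathlib

noncomputable def H1 (α v θ ω : ℝ) : ℝ := 2 * α * θ + ω * |ω|

noncomputable def H2 (α β v θ ω : ℝ) : ℝ := ω * |ω| / (2 * α) + θ + ω * |v| / β

theorem stmt4 (α β v θ ω : ℝ) (hα : 0 < α) (hβ : 0 < β)
    (hω : 0 < ω) (hH1 : H1 α v θ ω < 0) (hH2 : H2 α β v θ ω < 0) :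
    -ω / α + (1 / α) * Real.sqrt (2 * ω ^ 2 - 4 * α * θ + α ^ 2 * v ^ 2 / β ^ 2)
      < -2 * θ / ω + |v| / β := by
  have habs : |ω| = ω := abs_of_pos hω
  rw [H1, habs] at hH1
  rw [H2, habs] at hH2
  have h1 : 2 * α * θ + ω ^ 2 < 0 := by nlinarith [hH1]
  set a : ℝ := |v| / β with ha_def
  have ha : 0 ≤ a := div_nonneg (abs_nonneg v) hβ.le
  have h2 : ω ^ 2 + 2 * α * θ + 2 * α * ω * a < 0 := by
    have h2' : ω * ω / (2 * α) + θ + ω * a < 0 := by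
      rw [ha_def, ← mul_div_assoc]; exact hH2
    have h2'' := (div_lt_iff₀ (by positivity : (0:ℝ) < 2 * α)).mp
      (by linarith : ω * ω / (2 * α) < -θ - ω * a)
    nlinarith [h2'']
  have hv2 : a ^ 2 = v ^ 2 / β ^ 2 := by
    rw [ha_def, div_pow, sq_abs]
  have hθω : 2 * α * θ / ω + ω < 0 := by
    rw [div_add' _ _ _ (ne_of_gt hω)]
    exact div_neg_of_neg_of_pos (by nlinarith) hω
  have hθω2 : 2 * α * θ / ω * ω = 2 * α * θ := div_mul_cancel₀ _ (ne_of_gt hω)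
  have hR : 0 < α * (-2 * θ / ω + a) + ω := by
    have : -2 * α * θ / ω > ω + 2 * α * a := by
      rw [gt_iff_lt, lt_div_iff₀ hω]; nlinarith
    have heq : α * (-2 * θ / ω) = -2 * α * θ / ω := by ring
    nlinarith [this]
  have hS : Real.sqrt (2 * ω ^ 2 - 4 * α * θ + α ^ 2 * v ^ 2 / β ^ 2)
      < α * (-2 * θ / ω + a) + ω := by
    rw [Real.sqrt_lt' hR]
    have key : (2 * α * θ / ω + ω) * (2 * α * θ / ω - ω) > 0 :=
      mul_pos_of_neg_of_neg hθω (by nlinarith)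
    have cross : 0 ≤ a * (ω - 2 * α * θ / ω) := by
      apply mul_nonneg ha; nlinarith
    have heq : α * (-2 * θ / ω) = -(2 * α * θ / ω) := by ring
    rw [show α ^ 2 * v ^ 2 / β ^ 2 = α ^ 2 * a ^ 2 by rw [hv2]; ring]
    nlinarith [key, cross, sq_nonneg a, hθω2]
  calc -ω / α + (1 / α) * Real.sqrt (2 * ω ^ 2 - 4 * α * θ + α ^ 2 * v ^ 2 / β ^ 2)
      < -ω / α + (1 / α) * (α * (-2 * θ / ω + a) + ω) := by
        apply add_lt_add_right
        exact mul_lt_mul_of_pos_left hS (by positivity)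
    _ = -2 * θ / ω + a := by field_simp; ring
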